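/- Let d ≥ 1 and σ > 0. Suppose c₁, c₂ : ℕ^d → ℂ satisfy: for each j ∈ {1,2} and every r > 0 there is C > 0 with |c_j(α)| ≤ C r^{|α|} (α!)^{1/(2σ)} for all α ∈ ℕ^d. Define c(α) = Σ_{γ ≤ α} C(α,γ)^{1/2} c₁(γ) c₂(α−γ). Then for every r > 0 there is C' > 0 with |c(α)| ≤ C' r^{|α|} (α!)^{1/(2σ)} for all α ∈ ℕ^d. (This says that the space 𝒜_{♭_σ}'(ℂ^d) of power series Σ c(α) z^α/√(α!) is closed under pointwise multiplication.) -/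

import Mathlib

open Finset

noncomputable section

/-- Size of a multi-index: `|α| = α₁ + ⋯ + α_d`. -/
def msize {d : ℕ} (α : Fin d → ℕ) : ℕ := ∑ i, α i

/-- Factorial of a multi-index: `α! = ∏ᵢ αᵢ!`. -/
def mfact {d : ℕ} (α : Fin d → ℕ) : ℕ := ∏ i, Nat.factorial (α i)

/-- Binomial coefficient of multi-indices: `C(α,γ) = ∏ᵢ choose(αᵢ,γᵢ)`. -/
def mchoose {d : ℕ} (α γ : Fin d → ℕ) : ℕ := ∏ i, Nat.choose (α i) (γ i)

/-- Coefficients of the product of two power series `Σ c_j(α) z^α/√(α!)`: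
`c(α) = Σ_{γ ≤ α} C(α,γ)^{1/2} c₁(γ) c₂(α−γ)`. -/
def prodCoeff {d : ℕ} (c₁ c₂ : (Fin d → ℕ) → ℂ) : (Fin d → ℕ) → ℂ := fun α =>
  ∑ γ ∈ Finset.Iic α,
    ((Real.sqrt ((mchoose α γ : ℕ)) : ℝ) : ℂ) * c₁ γ * c₂ (α - γ)

lemma choose_le_two_pow' (n k : ℕ) : Nat.choose n k ≤ 2 ^ n := by
  rcases le_or_gt k n with h | h
  · calc Nat.choose n k ≤ ∑ m ∈ range (n+1), Nat.choose n m :=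
        Finset.single_le_sum (fun i _ => Nat.zero_le _) (by simp [Nat.lt_succ_iff, h])
      _ = 2 ^ n := Nat.sum_range_choose n
  · simp [Nat.choose_eq_zero_of_lt h]

lemma mchoose_le {d : ℕ} (α γ : Fin d → ℕ) : mchoose α γ ≤ 2 ^ msize α := by
  unfold mchoose msize
  rw [← Finset.prod_pow_eq_pow_sum]
  exact Finset.prod_le_prod (fun _ _ => Nat.zero_le _) (fun i _ => choose_le_two_pow' _ _)

lemma msize_add {d : ℕ} {α γ : Fin d → ℕ} (h : γ ≤ α) :
    msize γ + msize (α - γ) = msize α := by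
  unfold msize
  rw [← Finset.sum_add_distrib]
  exact Finset.sum_congr rfl fun i _ => by
    have hi : γ i ≤ α i := h i
    simp only [Pi.sub_apply]
    omega

lemma mfact_mul_le {d : ℕ} {α γ : Fin d → ℕ} (h : γ ≤ α) :
    mfact γ * mfact (α - γ) ≤ mfact α := by
  unfold mfact
  rw [← Finset.prod_mul_distrib]
  refine Finset.prod_le_prod (fun _ _ => Nat.zero_le _) (fun i _ => ?_)
  have hi : γ i ≤ α i := h i
  have := Nat.choose_mul_factorial_mul_factorial hi
  have h1 : 1 ≤ Nat.choose (α i) (γ i) := Nat.choose_pos hi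
  simp only [Pi.sub_apply]
  nlinarith [Nat.factorial_pos (γ i), Nat.factorial_pos (α i - γ i)]

lemma card_Iic_le' {d : ℕ} (α : Fin d → ℕ) : (Finset.Iic α).card ≤ 2 ^ msize α := by
  rw [Pi.card_Iic]
  unfold msize
  rw [← Finset.prod_pow_eq_pow_sum]
  refine Finset.prod_le_prod (fun _ _ => Nat.zero_le _) (fun i _ => ?_)
  rw [Nat.card_Iic]
  exact Nat.succ_le_of_lt Nat.lt_two_pow_self

/-- the space `𝒜_{♭_σ}'(ℂ^d)`, described by coefficient bounds
`|c(α)| ≤ C r^{|α|}(α!)^{1/(2σ)}` for every `r > 0`, is closed under the product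
of power series. -/
theorem stmt_18 (d : ℕ) (hd : 1 ≤ d) (σ : ℝ) (hσ : 0 < σ)
    (c₁ c₂ : (Fin d → ℕ) → ℂ)
    (h₁ : ∀ r > (0:ℝ), ∃ C > (0:ℝ), ∀ α : Fin d → ℕ,
      ‖c₁ α‖ ≤ C * (r ^ (msize α) * (mfact α : ℝ) ^ ((1:ℝ)/(2*σ))))
    (h₂ : ∀ r > (0:ℝ), ∃ C > (0:ℝ), ∀ α : Fin d → ℕ,
      ‖c₂ α‖ ≤ C * (r ^ (msize α) * (mfact α : ℝ) ^ ((1:ℝ)/(2*σ)))) :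
    ∀ r > (0:ℝ), ∃ C' > (0:ℝ), ∀ α : Fin d → ℕ,
      ‖prodCoeff c₁ c₂ α‖ ≤
        C' * (r ^ (msize α) * (mfact α : ℝ) ^ ((1:ℝ)/(2*σ))) := by
  intro r hr
  obtain ⟨C₁, hC₁, H₁⟩ := h₁ (r/4) (by positivity)
  obtain ⟨C₂, hC₂, H₂⟩ := h₂ (r/4) (by positivity)
  refine ⟨C₁ * C₂, by positivity, fun α => ?_⟩
  set s : ℝ := (1:ℝ)/(2*σ) with hs
  have hs0 : (0:ℝ) ≤ s := by positivity
  set n : ℕ := msize α with hn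
  set B : ℝ := (2:ℝ)^n * (C₁ * C₂) * (r/4)^n * (mfact α : ℝ)^s with hB
  have key : ∀ γ ∈ Finset.Iic α,
      ‖((Real.sqrt ((mchoose α γ : ℕ)) : ℝ) : ℂ) * c₁ γ * c₂ (α - γ)‖ ≤ B := by
    intro γ hγ
    rw [Finset.mem_Iic] at hγ
    have habs : ‖((Real.sqrt ((mchoose α γ : ℕ)) : ℝ) : ℂ) * c₁ γ * c₂ (α - γ)‖
        = Real.sqrt (mchoose α γ) * ‖c₁ γ‖ * ‖c₂ (α - γ)‖ := by
      rw [norm_mul, norm_mul, Complex.norm_real, Real.norm_of_nonneg (Real.sqrt_nonneg _)]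
    rw [habs]
    have hsq : Real.sqrt (mchoose α γ) ≤ (2:ℝ)^n := by
      have h1 : Real.sqrt (mchoose α γ) ≤ Real.sqrt (((2:ℕ)^n : ℕ) : ℝ) := by
        apply Real.sqrt_le_sqrt
        exact_mod_cast mchoose_le α γ
      refine h1.trans ?_
      push_cast
      calc Real.sqrt ((2:ℝ)^n) ≤ Real.sqrt (((2:ℝ)^n)^2) := by
            apply Real.sqrt_le_sqrt
            have : (1:ℝ) ≤ (2:ℝ)^n := one_le_pow₀ (by norm_num)
            nlinarith
        _ = (2:ℝ)^n := Real.sqrt_sq (by positivity)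
    have hfac : (mfact γ : ℝ)^s * (mfact (α - γ) : ℝ)^s ≤ (mfact α : ℝ)^s := by
      rw [← Real.mul_rpow (by positivity) (by positivity)]
      apply Real.rpow_le_rpow (by positivity) _ hs0
      exact_mod_cast mfact_mul_le hγ
    calc Real.sqrt (mchoose α γ) * ‖c₁ γ‖ * ‖c₂ (α - γ)‖
        ≤ (2:ℝ)^n * (C₁ * ((r/4) ^ (msize γ) * (mfact γ : ℝ)^s))
            * (C₂ * ((r/4) ^ (msize (α - γ)) * (mfact (α - γ) : ℝ)^s)) := by
          apply mul_le_mul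
          · exact mul_le_mul hsq (H₁ γ) (norm_nonneg _) (by positivity)
          · exact H₂ (α - γ)
          · exact norm_nonneg _
          · positivity
      _ = (2:ℝ)^n * (C₁ * C₂) * (r/4)^n
            * ((mfact γ : ℝ)^s * (mfact (α - γ) : ℝ)^s) := by
          rw [hn, ← msize_add hγ, pow_add]
          ring
      _ ≤ B := by
          rw [hB]
          apply mul_le_mul_of_nonneg_left hfac
          positivity
  have hsum : ‖prodCoeff c₁ c₂ α‖ ≤ (Finset.Iic α).card • B := by
    unfold prodCoeff
    refine (norm_sum_le _ _).trans ?_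
    exact Finset.sum_le_card_nsmul _ _ _ key
  have hB0 : 0 ≤ B := by positivity
  have hcard : ((Finset.Iic α).card : ℝ) ≤ (2:ℝ)^n := by
    exact_mod_cast card_Iic_le' α
  calc ‖prodCoeff c₁ c₂ α‖ ≤ (Finset.Iic α).card • B := hsum
    _ = ((Finset.Iic α).card : ℝ) * B := by rw [nsmul_eq_mul]
    _ ≤ (2:ℝ)^n * B := mul_le_mul_of_nonneg_right hcard hB0
    _ = C₁ * C₂ * (r ^ n * (mfact α : ℝ)^s) := by
        rw [hB]
        have h4 : (2:ℝ)^n * ((2:ℝ)^n * (r/4)^n) = r^n := by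
          rw [← mul_pow, ← mul_pow]
          congr 1
          ring
        have h5 : (2:ℝ)^n * ((2:ℝ)^n * (C₁ * C₂) * (r/4)^n * (mfact α : ℝ)^s)
            = ((2:ℝ)^n * ((2:ℝ)^n * (r/4)^n)) * (C₁ * C₂ * (mfact α : ℝ)^s) := by ring
        rw [h5, h4]
        ring

end
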